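/- For nonnegative real numbers n_{s-1}, ..., n_m satisfying (i) Σ_{i=s-1}^m n_i = n, (ii) Σ_{i=s-1}^m binom(i,s)·n_i ≤ (t-1)·binom(m,s), and (iii) Σ_{i=s-1}^{k-1} ((i-s+1-α)/(k-s+1-α))·binom(i,s-1)·n_i + Σ_{i=k}^m binom(i,s-1)·n_i ≤ binom(m,s-1)·((t-1)(m-s+1)-α)/(k-s+1), where s ≥ 2, k ≥ max{2,s²-2s}, s ≤ k ≤ m are integers and α is the residue of (t-1)(m-s+1) modulo k-s+1 with 0 ≤ α ≤ k-s, we have Σ_{i=s-1}^m i·n_i ≤ B_k(m,n;s,t), where B_k(m,n;s,t) = (binom(m,s-1)/binom(k,s-1))·((t-1)(m-s+1)/s·(β(k+1)/(k-s+1)+1) - αβ(k-s+2)/(k-s+1)) + (k+1)(s-1-β)n/s with β = ((s-1)(k-s+1)-α(s-1))/((k+1)(k-s+1)-α(s-1)). -/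

import Mathlib

lemma aux_g (k s : ℕ) (hs : 2 ≤ s) (hsk : s ≤ k) (β : ℝ)
    (hβ0 : 0 ≤ β) (hβ1 : ((s:ℝ)-1)*β ≤ 1) :
    ∀ i, k ≤ i → (i:ℝ) ≤ ((k:ℝ)+1)*((s:ℝ)-1-β)/s
      + (1-((s:ℝ)-1)*β)/(Nat.choose k (s-1):ℝ) * (Nat.choose i s : ℝ)
      + ((k:ℝ)-(s:ℝ)+2)*β/(Nat.choose k (s-1):ℝ) * (Nat.choose i (s-1) : ℝ) := by
  have hZ : 0 < (Nat.choose k (s-1):ℝ) := by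
    exact_mod_cast Nat.choose_pos (by omega)
  have hS : (0:ℝ) < s := by exact_mod_cast (by omega : 0 < s)
  have hSk : (s:ℝ) ≤ k := by exact_mod_cast hsk
  -- C(k,s)*s = C(k,s-1)*(k-s+1)
  have hks : (Nat.choose k s : ℝ) * s = (Nat.choose k (s-1) : ℝ) * ((k:ℝ) - s + 1) := by
    have h := Nat.choose_succ_right_eq k (s-1)
    have e1 : s - 1 + 1 = s := by omega
    rw [e1] at h
    have : ((Nat.choose k s * s : ℕ) : ℝ) = ((Nat.choose k (s-1) * (k - (s-1)) : ℕ) : ℝ) := by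
      exact_mod_cast congrArg Nat.cast h
    push_cast [Nat.cast_sub (by omega : s - 1 ≤ k), Nat.cast_sub (by omega : 1 ≤ s)] at this
    linarith [this]
  -- C(k,s-1)*(s-1) = C(k,s-2)*(k-s+2)
  have hkk : (Nat.choose k (s-1) : ℝ) * ((s:ℝ)-1) = (Nat.choose k (s-2) : ℝ) * ((k:ℝ) - s + 2) := by
    have h := Nat.choose_succ_right_eq k (s-2)
    have e1 : s - 2 + 1 = s - 1 := by omega
    rw [e1] at h
    have : ((Nat.choose k (s-1) * (s-1) : ℕ) : ℝ) = ((Nat.choose k (s-2) * (k - (s-2)) : ℕ) : ℝ) := by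
      exact_mod_cast congrArg Nat.cast h
    push_cast [Nat.cast_sub (by omega : s - 2 ≤ k), Nat.cast_sub (by omega : 1 ≤ s),
      Nat.cast_sub (by omega : 2 ≤ s)] at this
    linarith [this]
  intro i hi
  induction i, hi using Nat.le_induction with
  | base =>
    have : ((k:ℝ)+1)*((s:ℝ)-1-β)/s
      + (1-((s:ℝ)-1)*β)/(Nat.choose k (s-1):ℝ) * (Nat.choose k s : ℝ)
      + ((k:ℝ)-(s:ℝ)+2)*β/(Nat.choose k (s-1):ℝ) * (Nat.choose k (s-1) : ℝ) = (k:ℝ) := by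
      field_simp
      linear_combination (1-((s:ℝ)-1)*β) * hks
    linarith [this]
  | succ i hi ih =>
    have hP1 : (Nat.choose (i+1) s : ℝ) = (Nat.choose i (s-1) : ℝ) + (Nat.choose i s : ℝ) := by
      have e1 : s = (s-1) + 1 := by omega
      rw [e1, Nat.choose_succ_succ]
      push_cast; ring
    have hP2 : (Nat.choose (i+1) (s-1) : ℝ) = (Nat.choose i (s-2) : ℝ) + (Nat.choose i (s-1) : ℝ) := by
      have e1 : s - 1 = (s-2) + 1 := by omega
      rw [e1, Nat.choose_succ_succ]
      push_cast; ring
    have hm1 : (Nat.choose k (s-1) : ℝ) ≤ (Nat.choose i (s-1) : ℝ) := by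
      exact_mod_cast Nat.choose_le_choose (s-1) hi
    have hm2 : (Nat.choose k (s-2) : ℝ) ≤ (Nat.choose i (s-2) : ℝ) := by
      exact_mod_cast Nat.choose_le_choose (s-2) hi
    have hBc0 : 0 ≤ (1-((s:ℝ)-1)*β)/(Nat.choose k (s-1):ℝ) := by
      apply div_nonneg (by linarith) hZ.le
    have hCc0 : 0 ≤ ((k:ℝ)-(s:ℝ)+2)*β/(Nat.choose k (s-1):ℝ) := by
      apply div_nonneg (mul_nonneg (by linarith) hβ0) hZ.le
    have key : 1 ≤ (1-((s:ℝ)-1)*β)/(Nat.choose k (s-1):ℝ) * (Nat.choose i (s-1) : ℝ)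
        + ((k:ℝ)-(s:ℝ)+2)*β/(Nat.choose k (s-1):ℝ) * (Nat.choose i (s-2) : ℝ) := by
      have e1 : (1-((s:ℝ)-1)*β)/(Nat.choose k (s-1):ℝ) * (Nat.choose k (s-1) : ℝ)
          + ((k:ℝ)-(s:ℝ)+2)*β/(Nat.choose k (s-1):ℝ) * (Nat.choose k (s-2) : ℝ) = 1 := by
        field_simp
        linear_combination (-β) * hkk
      have e2 := mul_le_mul_of_nonneg_left hm1 hBc0
      have e3 := mul_le_mul_of_nonneg_left hm2 hCc0
      linarith
    rw [hP1, hP2]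
    push_cast
    linarith [ih]

lemma aux_f (k s α : ℕ) (hs : 2 ≤ s) (hsk : s ≤ k) (hα : α ≤ k - s) (β : ℝ)
    (hβ : β = (((s : ℝ) - 1) * ((k : ℝ) - s + 1) - α * ((s : ℝ) - 1)) /
               (((k : ℝ) + 1) * ((k : ℝ) - s + 1) - α * ((s : ℝ) - 1)))
    (hβ0 : 0 ≤ β) (hβ1 : ((s:ℝ)-1)*β ≤ 1) :
    ∀ i, s - 1 ≤ i → i ≤ k → (i:ℝ) ≤ ((k:ℝ)+1)*((s:ℝ)-1-β)/s
      + (1-((s:ℝ)-1)*β)/(Nat.choose k (s-1):ℝ) * (Nat.choose i s : ℝ)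
      + ((k:ℝ)-(s:ℝ)+2)*β/(Nat.choose k (s-1):ℝ) *
          ((((i:ℝ) - s + 1 - α) / ((k:ℝ) - s + 1 - α)) * (Nat.choose i (s-1) : ℝ)) := by
  have hZ : 0 < (Nat.choose k (s-1):ℝ) := by
    exact_mod_cast Nat.choose_pos (by omega)
  have hS : (0:ℝ) < s := by exact_mod_cast (by omega : 0 < s)
  have hSk : (s:ℝ) ≤ k := by exact_mod_cast hsk
  have hK : (0:ℝ) < k := by exact_mod_cast (by omega : 0 < k)
  have hal : (α:ℝ) ≤ (k:ℝ) - s := by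
    have : (α:ℝ) ≤ ((k - s : ℕ) : ℝ) := by exact_mod_cast hα
    rwa [Nat.cast_sub hsk] at this
  have hal0 : (0:ℝ) ≤ α := Nat.cast_nonneg α
  have hd2 : (0:ℝ) < (k:ℝ) - s + 1 - α := by linarith
  have hD : (0:ℝ) < ((k : ℝ) + 1) * ((k : ℝ) - s + 1) - α * ((s : ℝ) - 1) := by
    nlinarith [hal, hal0, hSk, hS]
  -- C(k,s)*s = C(k,s-1)*(k-s+1)
  have hks : (Nat.choose k s : ℝ) * s = (Nat.choose k (s-1) : ℝ) * ((k:ℝ) - s + 1) := by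
    have h := Nat.choose_succ_right_eq k (s-1)
    rw [show s - 1 + 1 = s by omega] at h
    have : ((Nat.choose k s * s : ℕ) : ℝ) = ((Nat.choose k (s-1) * (k - (s-1)) : ℕ) : ℝ) := by
      exact_mod_cast congrArg Nat.cast h
    push_cast [Nat.cast_sub (by omega : s - 1 ≤ k), Nat.cast_sub (by omega : 1 ≤ s)] at this
    linarith [this]
  -- Pascal at k-1 : C(k,s-1) = C(k-1,s-2) + C(k-1,s-1)
  have hXY : (Nat.choose k (s-1) : ℝ)
      = (Nat.choose (k-1) (s-2) : ℝ) + (Nat.choose (k-1) (s-1) : ℝ) := by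
    have h := Nat.choose_succ_succ (k-1) (s-2)
    simp only [Nat.succ_eq_add_one] at h
    rw [show s - 2 + 1 = s - 1 by omega, show k - 1 + 1 = k by omega] at h
    exact_mod_cast congrArg (Nat.cast (R := ℝ)) h
  -- k * C(k-1,s-2) = C(k,s-1) * (s-1)
  have hKX : (k:ℝ) * (Nat.choose (k-1) (s-2) : ℝ) = (Nat.choose k (s-1) : ℝ) * ((s:ℝ)-1) := by
    have h := Nat.add_one_mul_choose_eq (k-1) (s-2)
    rw [show s - 2 + 1 = s - 1 by omega, show k - 1 + 1 = k by omega] at h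
    have : ((k * Nat.choose (k-1) (s-2) : ℕ) : ℝ)
        = ((Nat.choose k (s-1) * (s-1) : ℕ) : ℝ) := by exact_mod_cast congrArg Nat.cast h
    push_cast [Nat.cast_sub (by omega : 1 ≤ s)] at this
    linarith [this]
  have hX0 : (0:ℝ) ≤ (Nat.choose (k-1) (s-2) : ℝ) := Nat.cast_nonneg _
  have hY0 : (0:ℝ) ≤ (Nat.choose (k-1) (s-1) : ℝ) := Nat.cast_nonneg _
  have hBc0 : 0 ≤ (1-((s:ℝ)-1)*β)/(Nat.choose k (s-1):ℝ) :=
    div_nonneg (by linarith) hZ.le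
  have hCc0 : 0 ≤ ((k:ℝ)-(s:ℝ)+2)*β/(Nat.choose k (s-1):ℝ) :=
    div_nonneg (mul_nonneg (by linarith) hβ0) hZ.le
  -- the key equality E
  have hXv : (Nat.choose (k-1) (s-2) : ℝ) = ((s:ℝ)-1) * (Nat.choose k (s-1):ℝ) / k := by
    field_simp; linarith [hKX]
  have hYv : (Nat.choose (k-1) (s-1) : ℝ)
      = (Nat.choose k (s-1):ℝ) - (Nat.choose (k-1) (s-2) : ℝ) := by linarith [hXY]
  have Ekey : (1-((s:ℝ)-1)*β)/(Nat.choose k (s-1):ℝ) * (Nat.choose (k-1) (s-1) : ℝ)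
      + ((k:ℝ)-(s:ℝ)+2)*β/(Nat.choose k (s-1):ℝ) * (Nat.choose (k-1) (s-2) : ℝ)
      + ((k:ℝ)-(s:ℝ)+2)*β/(Nat.choose k (s-1):ℝ) *
          ((Nat.choose (k-1) (s-1) : ℝ) / ((k:ℝ) - s + 1 - α)) = 1 := by
    rw [hYv, hXv]
    have hβ' := hβ
    rw [eq_div_iff hD.ne'] at hβ'
    field_simp
    linear_combination hβ'
  -- base identity at i = k
  have base : (k:ℝ) ≤ ((k:ℝ)+1)*((s:ℝ)-1-β)/s
      + (1-((s:ℝ)-1)*β)/(Nat.choose k (s-1):ℝ) * (Nat.choose k s : ℝ)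
      + ((k:ℝ)-(s:ℝ)+2)*β/(Nat.choose k (s-1):ℝ) *
          ((((k:ℝ) - s + 1 - α) / ((k:ℝ) - s + 1 - α)) * (Nat.choose k (s-1) : ℝ)) := by
    rw [div_self (ne_of_gt hd2), one_mul]
    have : ((k:ℝ)+1)*((s:ℝ)-1-β)/s
      + (1-((s:ℝ)-1)*β)/(Nat.choose k (s-1):ℝ) * (Nat.choose k s : ℝ)
      + ((k:ℝ)-(s:ℝ)+2)*β/(Nat.choose k (s-1):ℝ) * (Nat.choose k (s-1) : ℝ) = (k:ℝ) := by
      field_simp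
      linear_combination (1-((s:ℝ)-1)*β) * hks
    linarith [this]
  -- downward induction
  have main : ∀ d i, s - 1 ≤ i → i + d = k → (i:ℝ) ≤ ((k:ℝ)+1)*((s:ℝ)-1-β)/s
      + (1-((s:ℝ)-1)*β)/(Nat.choose k (s-1):ℝ) * (Nat.choose i s : ℝ)
      + ((k:ℝ)-(s:ℝ)+2)*β/(Nat.choose k (s-1):ℝ) *
          ((((i:ℝ) - s + 1 - α) / ((k:ℝ) - s + 1 - α)) * (Nat.choose i (s-1) : ℝ)) := by
    intro d
    induction d with
    | zero =>
      intro i hsi hik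
      have : i = k := by omega
      subst this
      exact base
    | succ d ih =>
      intro i hsi hik
      have h1 := ih (i+1) (by omega) (by omega)
      have hik' : i + 1 ≤ k := by omega
      -- Pascal at i
      have hP1 : (Nat.choose (i+1) s : ℝ) = (Nat.choose i (s-1) : ℝ) + (Nat.choose i s : ℝ) := by
        have e1 : s = (s-1) + 1 := by omega
        rw [e1, Nat.choose_succ_succ]
        push_cast; ring
      have hP2 : (Nat.choose (i+1) (s-1) : ℝ)
          = (Nat.choose i (s-2) : ℝ) + (Nat.choose i (s-1) : ℝ) := by
        have e1 : s - 1 = (s-2) + 1 := by omega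
        rw [e1, Nat.choose_succ_succ]
        push_cast; ring
      have hm1 : (Nat.choose i (s-1) : ℝ) ≤ (Nat.choose (k-1) (s-1) : ℝ) := by
        exact_mod_cast Nat.choose_le_choose (s-1) (by omega : i ≤ k - 1)
      have hm2 : (Nat.choose i (s-2) : ℝ) ≤ (Nat.choose (k-1) (s-2) : ℝ) := by
        exact_mod_cast Nat.choose_le_choose (s-2) (by omega : i ≤ k - 1)
      have hi0 : (0:ℝ) ≤ (Nat.choose i (s-2) : ℝ) := Nat.cast_nonneg _
      have hi1 : (0:ℝ) ≤ (Nat.choose i (s-1) : ℝ) := Nat.cast_nonneg _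
      have hw1 : (((i:ℝ)+1) - s + 1 - α) / ((k:ℝ) - s + 1 - α) ≤ 1 := by
        rw [div_le_one hd2]
        have : ((i:ℝ)+1) ≤ k := by exact_mod_cast hik'
        linarith
      push_cast at h1
      -- bound the three increment terms
      have b1 : (1-((s:ℝ)-1)*β)/(Nat.choose k (s-1):ℝ) * (Nat.choose i (s-1) : ℝ)
          ≤ (1-((s:ℝ)-1)*β)/(Nat.choose k (s-1):ℝ) * (Nat.choose (k-1) (s-1) : ℝ) :=
        mul_le_mul_of_nonneg_left hm1 hBc0
      have b2 : ((k:ℝ)-(s:ℝ)+2)*β/(Nat.choose k (s-1):ℝ) *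
            ((((i:ℝ)+1) - s + 1 - α) / ((k:ℝ) - s + 1 - α) * (Nat.choose i (s-2) : ℝ))
          ≤ ((k:ℝ)-(s:ℝ)+2)*β/(Nat.choose k (s-1):ℝ) * (Nat.choose (k-1) (s-2) : ℝ) := by
        apply mul_le_mul_of_nonneg_left _ hCc0
        calc (((i:ℝ)+1) - s + 1 - α) / ((k:ℝ) - s + 1 - α) * (Nat.choose i (s-2) : ℝ)
            ≤ 1 * (Nat.choose i (s-2) : ℝ) := mul_le_mul_of_nonneg_right hw1 hi0
          _ = (Nat.choose i (s-2) : ℝ) := one_mul _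
          _ ≤ (Nat.choose (k-1) (s-2) : ℝ) := hm2
      have b3 : ((k:ℝ)-(s:ℝ)+2)*β/(Nat.choose k (s-1):ℝ) *
            ((Nat.choose i (s-1) : ℝ) / ((k:ℝ) - s + 1 - α))
          ≤ ((k:ℝ)-(s:ℝ)+2)*β/(Nat.choose k (s-1):ℝ) *
            ((Nat.choose (k-1) (s-1) : ℝ) / ((k:ℝ) - s + 1 - α)) := by
        apply mul_le_mul_of_nonneg_left _ hCc0
        gcongr
      have hsplit : ((k:ℝ)-(s:ℝ)+2)*β/(Nat.choose k (s-1):ℝ) *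
            ((((i:ℝ)+1) - s + 1 - α) / ((k:ℝ) - s + 1 - α) * (Nat.choose i (s-1) : ℝ))
          = ((k:ℝ)-(s:ℝ)+2)*β/(Nat.choose k (s-1):ℝ) *
            (((i:ℝ) - s + 1 - α) / ((k:ℝ) - s + 1 - α) * (Nat.choose i (s-1) : ℝ))
          + ((k:ℝ)-(s:ℝ)+2)*β/(Nat.choose k (s-1):ℝ) *
            ((Nat.choose i (s-1) : ℝ) / ((k:ℝ) - s + 1 - α)) := by
        field_simp
        ring
      rw [hP1, hP2] at h1
      linarith [h1, b1, b2, b3, Ekey, hsplit]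
  intro i hsi hik
  exact main (k - i) i hsi (by omega)

set_option maxHeartbeats 1000000
set_option maxRecDepth 4000

/-- Linear-programming core of the main theorem: any nonnegative reals
`n_{s-1},…,n_m` satisfying Roman's constraints together with the `v = s-1`
constraint have `∑ i·n_i ≤ B_k(m,n;s,t)`. -/
theorem stmt_14 (k s t m : ℕ) (hs : 2 ≤ s) (hk : max 2 (s ^ 2 - 2 * s) ≤ k)
    (hsk : s ≤ k) (hkm : k ≤ m) (ht : 1 ≤ t)
    (α : ℕ) (hα : α ≤ k - s)
    (hmod : α ≡ (t - 1) * (m - s + 1) [MOD k - s + 1])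
    (β : ℝ)
    (hβ : β = (((s : ℝ) - 1) * ((k : ℝ) - s + 1) - α * ((s : ℝ) - 1)) /
               (((k : ℝ) + 1) * ((k : ℝ) - s + 1) - α * ((s : ℝ) - 1)))
    (nn : ℕ → ℝ) (hpos : ∀ i ∈ Finset.Icc (s - 1) m, 0 ≤ nn i)
    (n : ℝ)
    (h1 : ∑ i ∈ Finset.Icc (s - 1) m, nn i = n)
    (h2 : ∑ i ∈ Finset.Icc (s - 1) m, (Nat.choose i s : ℝ) * nn i ≤
      ((t : ℝ) - 1) * Nat.choose m s)
    (h3 : ∑ i ∈ Finset.Icc (s - 1) (k - 1),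
            (((i : ℝ) - s + 1 - α) / ((k : ℝ) - s + 1 - α)) * (Nat.choose i (s - 1) : ℝ) * nn i +
          ∑ i ∈ Finset.Icc k m, (Nat.choose i (s - 1) : ℝ) * nn i ≤
      (Nat.choose m (s - 1) : ℝ) * (((t : ℝ) - 1) * ((m : ℝ) - s + 1) - α) / ((k : ℝ) - s + 1)) :
    ∑ i ∈ Finset.Icc (s - 1) m, (i : ℝ) * nn i ≤
      ((Nat.choose m (s - 1) : ℝ) / (Nat.choose k (s - 1) : ℝ)) *
          (((t : ℝ) - 1) * ((m : ℝ) - s + 1) / s * (β * ((k : ℝ) + 1) / ((k : ℝ) - s + 1) + 1) -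
            α * β * ((k : ℝ) - s + 2) / ((k : ℝ) - s + 1)) +
        ((k : ℝ) + 1) * ((s : ℝ) - 1 - β) * n / s := by
  have hZ : 0 < (Nat.choose k (s-1):ℝ) := by
    exact_mod_cast Nat.choose_pos (by omega)
  have hS : (0:ℝ) < s := by exact_mod_cast (by omega : 0 < s)
  have hSk : (s:ℝ) ≤ k := by exact_mod_cast hsk
  have hK : (0:ℝ) < k := by exact_mod_cast (by omega : 0 < k)
  have hal : (α:ℝ) ≤ (k:ℝ) - s := by
    have : (α:ℝ) ≤ ((k - s : ℕ) : ℝ) := by exact_mod_cast hα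
    rwa [Nat.cast_sub hsk] at this
  have hal0 : (0:ℝ) ≤ α := Nat.cast_nonneg α
  have hd2 : (0:ℝ) < (k:ℝ) - s + 1 - α := by linarith
  have hd1 : (0:ℝ) < (k:ℝ) - s + 1 := by linarith
  have hD : (0:ℝ) < ((k : ℝ) + 1) * ((k : ℝ) - s + 1) - α * ((s : ℝ) - 1) := by
    nlinarith [hal, hal0, hSk, hS]
  have hksq : (s:ℝ)^2 - 2*s ≤ k := by
    have h2s : 2*s ≤ s^2 := by nlinarith [hs]
    have h' := le_trans (le_max_right 2 (s^2 - 2*s)) hk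
    have h'' : ((s^2 - 2*s : ℕ) : ℝ) ≤ (k:ℝ) := by exact_mod_cast h'
    rw [Nat.cast_sub h2s] at h''
    push_cast at h''
    linarith
  have hS2 : (2:ℝ) ≤ s := by exact_mod_cast hs
  have hβ0 : 0 ≤ β := by
    rw [hβ]
    apply div_nonneg _ hD.le
    nlinarith [mul_le_mul_of_nonneg_left hal (show (0:ℝ) ≤ (s:ℝ)-1 by linarith [hS2])]
  have hβ1 : ((s:ℝ)-1)*β ≤ 1 := by
    rw [hβ, ← mul_div_assoc, div_le_one hD]
    nlinarith [mul_nonneg hal0 (show (0:ℝ) ≤ ((s:ℝ)-1)*((s:ℝ)-2) by nlinarith [hS2]),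
      mul_nonneg hd1.le (show (0:ℝ) ≤ (k:ℝ)+1-((s:ℝ)-1)^2 by nlinarith [hksq])]
  have hβs : β ≤ (s:ℝ) - 1 := by nlinarith [hβ0, hβ1, hS2, mul_nonneg (show (0:ℝ) ≤ (s:ℝ)-2 by linarith [hS2]) hβ0]
  have hA0 : 0 ≤ ((k:ℝ)+1)*((s:ℝ)-1-β)/s :=
    div_nonneg (mul_nonneg (by linarith) (by linarith)) hS.le
  have hBc0 : 0 ≤ (1-((s:ℝ)-1)*β)/(Nat.choose k (s-1):ℝ) :=
    div_nonneg (by linarith) hZ.le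
  have hCc0 : 0 ≤ ((k:ℝ)-(s:ℝ)+2)*β/(Nat.choose k (s-1):ℝ) :=
    div_nonneg (mul_nonneg (by linarith) hβ0) hZ.le
  -- splitting of sums
  have hset : Finset.Icc (s-1) m = Finset.Icc (s-1) (k-1) ∪ Finset.Icc k m := by
    ext x
    simp only [Finset.mem_Icc, Finset.mem_union]
    omega
  have hdisj : Disjoint (Finset.Icc (s-1) (k-1)) (Finset.Icc k m) := by
    rw [Finset.disjoint_left]
    intro a ha hb
    simp only [Finset.mem_Icc] at ha hb
    omega
  have hsum : ∀ f : ℕ → ℝ, ∑ i ∈ Finset.Icc (s-1) m, f i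
      = ∑ i ∈ Finset.Icc (s-1) (k-1), f i + ∑ i ∈ Finset.Icc k m, f i := by
    intro f
    rw [hset, Finset.sum_union hdisj]
  -- pointwise bounds
  have hf := aux_f k s α hs hsk hα β hβ hβ0 hβ1
  have hg := aux_g k s hs hsk β hβ0 hβ1
  have step1 : ∑ i ∈ Finset.Icc (s-1) m, (i:ℝ) * nn i ≤
      ∑ i ∈ Finset.Icc (s-1) (k-1),
        (((k:ℝ)+1)*((s:ℝ)-1-β)/s
          + (1-((s:ℝ)-1)*β)/(Nat.choose k (s-1):ℝ) * (Nat.choose i s : ℝ)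
          + ((k:ℝ)-(s:ℝ)+2)*β/(Nat.choose k (s-1):ℝ) *
              ((((i:ℝ) - s + 1 - α) / ((k:ℝ) - s + 1 - α)) * (Nat.choose i (s-1) : ℝ))) * nn i
      + ∑ i ∈ Finset.Icc k m,
        (((k:ℝ)+1)*((s:ℝ)-1-β)/s
          + (1-((s:ℝ)-1)*β)/(Nat.choose k (s-1):ℝ) * (Nat.choose i s : ℝ)
          + ((k:ℝ)-(s:ℝ)+2)*β/(Nat.choose k (s-1):ℝ) * (Nat.choose i (s-1) : ℝ)) * nn i := by
    rw [hsum (fun i => (i:ℝ) * nn i)]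
    apply add_le_add
    · apply Finset.sum_le_sum
      intro i hi
      simp only [Finset.mem_Icc] at hi
      apply mul_le_mul_of_nonneg_right (hf i hi.1 (by omega))
      exact hpos i (by simp only [Finset.mem_Icc]; omega)
    · apply Finset.sum_le_sum
      intro i hi
      simp only [Finset.mem_Icc] at hi
      apply mul_le_mul_of_nonneg_right (hg i hi.1)
      exact hpos i (by simp only [Finset.mem_Icc]; omega)
  -- rearrange
  have eL : ∑ i ∈ Finset.Icc (s-1) (k-1),
        (((k:ℝ)+1)*((s:ℝ)-1-β)/s
          + (1-((s:ℝ)-1)*β)/(Nat.choose k (s-1):ℝ) * (Nat.choose i s : ℝ)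
          + ((k:ℝ)-(s:ℝ)+2)*β/(Nat.choose k (s-1):ℝ) *
              ((((i:ℝ) - s + 1 - α) / ((k:ℝ) - s + 1 - α)) * (Nat.choose i (s-1) : ℝ))) * nn i
      = ((k:ℝ)+1)*((s:ℝ)-1-β)/s * ∑ i ∈ Finset.Icc (s-1) (k-1), nn i
        + (1-((s:ℝ)-1)*β)/(Nat.choose k (s-1):ℝ) *
            ∑ i ∈ Finset.Icc (s-1) (k-1), (Nat.choose i s : ℝ) * nn i
        + ((k:ℝ)-(s:ℝ)+2)*β/(Nat.choose k (s-1):ℝ) *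
            ∑ i ∈ Finset.Icc (s-1) (k-1),
              (((i : ℝ) - s + 1 - α) / ((k : ℝ) - s + 1 - α)) * (Nat.choose i (s - 1) : ℝ) * nn i := by
    rw [Finset.mul_sum, Finset.mul_sum, Finset.mul_sum, ← Finset.sum_add_distrib,
      ← Finset.sum_add_distrib]
    exact Finset.sum_congr rfl fun i _ => by ring
  have eU : ∑ i ∈ Finset.Icc k m,
        (((k:ℝ)+1)*((s:ℝ)-1-β)/s
          + (1-((s:ℝ)-1)*β)/(Nat.choose k (s-1):ℝ) * (Nat.choose i s : ℝ)
          + ((k:ℝ)-(s:ℝ)+2)*β/(Nat.choose k (s-1):ℝ) * (Nat.choose i (s-1) : ℝ)) * nn i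
      = ((k:ℝ)+1)*((s:ℝ)-1-β)/s * ∑ i ∈ Finset.Icc k m, nn i
        + (1-((s:ℝ)-1)*β)/(Nat.choose k (s-1):ℝ) *
            ∑ i ∈ Finset.Icc k m, (Nat.choose i s : ℝ) * nn i
        + ((k:ℝ)-(s:ℝ)+2)*β/(Nat.choose k (s-1):ℝ) *
            ∑ i ∈ Finset.Icc k m, (Nat.choose i (s - 1) : ℝ) * nn i := by
    rw [Finset.mul_sum, Finset.mul_sum, Finset.mul_sum, ← Finset.sum_add_distrib,
      ← Finset.sum_add_distrib]
    exact Finset.sum_congr rfl fun i _ => by ring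
  have step2 : ∑ i ∈ Finset.Icc (s-1) (k-1),
        (((k:ℝ)+1)*((s:ℝ)-1-β)/s
          + (1-((s:ℝ)-1)*β)/(Nat.choose k (s-1):ℝ) * (Nat.choose i s : ℝ)
          + ((k:ℝ)-(s:ℝ)+2)*β/(Nat.choose k (s-1):ℝ) *
              ((((i:ℝ) - s + 1 - α) / ((k:ℝ) - s + 1 - α)) * (Nat.choose i (s-1) : ℝ))) * nn i
      + ∑ i ∈ Finset.Icc k m,
        (((k:ℝ)+1)*((s:ℝ)-1-β)/s
          + (1-((s:ℝ)-1)*β)/(Nat.choose k (s-1):ℝ) * (Nat.choose i s : ℝ)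
          + ((k:ℝ)-(s:ℝ)+2)*β/(Nat.choose k (s-1):ℝ) * (Nat.choose i (s-1) : ℝ)) * nn i
      = ((k:ℝ)+1)*((s:ℝ)-1-β)/s * ∑ i ∈ Finset.Icc (s-1) m, nn i
        + (1-((s:ℝ)-1)*β)/(Nat.choose k (s-1):ℝ) *
            ∑ i ∈ Finset.Icc (s-1) m, (Nat.choose i s : ℝ) * nn i
        + ((k:ℝ)-(s:ℝ)+2)*β/(Nat.choose k (s-1):ℝ) *
            (∑ i ∈ Finset.Icc (s-1) (k-1),
              (((i : ℝ) - s + 1 - α) / ((k : ℝ) - s + 1 - α)) * (Nat.choose i (s - 1) : ℝ) * nn i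
            + ∑ i ∈ Finset.Icc k m, (Nat.choose i (s - 1) : ℝ) * nn i) := by
    rw [eL, eU, hsum (fun i => nn i), hsum (fun i => (Nat.choose i s : ℝ) * nn i)]
    ring
  -- use the constraints
  have step3 : ((k:ℝ)+1)*((s:ℝ)-1-β)/s * ∑ i ∈ Finset.Icc (s-1) m, nn i
        + (1-((s:ℝ)-1)*β)/(Nat.choose k (s-1):ℝ) *
            ∑ i ∈ Finset.Icc (s-1) m, (Nat.choose i s : ℝ) * nn i
        + ((k:ℝ)-(s:ℝ)+2)*β/(Nat.choose k (s-1):ℝ) *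
            (∑ i ∈ Finset.Icc (s-1) (k-1),
              (((i : ℝ) - s + 1 - α) / ((k : ℝ) - s + 1 - α)) * (Nat.choose i (s - 1) : ℝ) * nn i
            + ∑ i ∈ Finset.Icc k m, (Nat.choose i (s - 1) : ℝ) * nn i)
      ≤ ((k:ℝ)+1)*((s:ℝ)-1-β)/s * n
        + (1-((s:ℝ)-1)*β)/(Nat.choose k (s-1):ℝ) * (((t : ℝ) - 1) * Nat.choose m s)
        + ((k:ℝ)-(s:ℝ)+2)*β/(Nat.choose k (s-1):ℝ) *
            ((Nat.choose m (s - 1) : ℝ) * (((t : ℝ) - 1) * ((m : ℝ) - s + 1) - α)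
              / ((k : ℝ) - s + 1)) := by
    rw [h1]
    apply add_le_add (add_le_add le_rfl (mul_le_mul_of_nonneg_left h2 hBc0))
      (mul_le_mul_of_nonneg_left h3 hCc0)
  -- final identity
  have hms : (Nat.choose m s : ℝ) * s = (Nat.choose m (s-1) : ℝ) * ((m:ℝ) - s + 1) := by
    have h := Nat.choose_succ_right_eq m (s-1)
    rw [show s - 1 + 1 = s by omega] at h
    have : ((Nat.choose m s * s : ℕ) : ℝ) = ((Nat.choose m (s-1) * (m - (s-1)) : ℕ) : ℝ) := by
      exact_mod_cast congrArg Nat.cast h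
    push_cast [Nat.cast_sub (by omega : s - 1 ≤ m), Nat.cast_sub (by omega : 1 ≤ s)] at this
    linarith [this]
  have final : ((k:ℝ)+1)*((s:ℝ)-1-β)/s * n
        + (1-((s:ℝ)-1)*β)/(Nat.choose k (s-1):ℝ) * (((t : ℝ) - 1) * Nat.choose m s)
        + ((k:ℝ)-(s:ℝ)+2)*β/(Nat.choose k (s-1):ℝ) *
            ((Nat.choose m (s - 1) : ℝ) * (((t : ℝ) - 1) * ((m : ℝ) - s + 1) - α)
              / ((k : ℝ) - s + 1))
      = ((Nat.choose m (s - 1) : ℝ) / (Nat.choose k (s - 1) : ℝ)) *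
          (((t : ℝ) - 1) * ((m : ℝ) - s + 1) / s * (β * ((k : ℝ) + 1) / ((k : ℝ) - s + 1) + 1) -
            α * β * ((k : ℝ) - s + 2) / ((k : ℝ) - s + 1)) +
        ((k : ℝ) + 1) * ((s : ℝ) - 1 - β) * n / s := by
    have hmsv : (Nat.choose m s : ℝ) = (Nat.choose m (s-1) : ℝ) * ((m:ℝ) - s + 1) / s := by
      field_simp
      linarith [hms]
    rw [hmsv]
    field_simp
    ring
  calc ∑ i ∈ Finset.Icc (s-1) m, (i:ℝ) * nn i ≤ _ := step1
    _ = _ := step2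
    _ ≤ _ := step3
    _ = _ := final
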